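/- arXiv:1805.03041 — 3 statements merged into one kernel-verified Lean document; each statement's English description precedes it below -/
import Mathlib

section
/- Let B = {b₀ = (0,0), b₁ = (1,0), b₂ = (0,1)} ⊆ ℤ² with 8-adjacency, let ℤ have 2-adjacency, and define p : ℤ → B by p(i) = b_{i mod 3}. Then p is a (2,8)-continuous surjection that has the unique path lifting property, the point 0 is a conciliator point for p, and p is not a digital (2,8)-covering map. (Example 3.7) -/
open Set

/-- 2-adjacency on `ℤ` (the `l₁`-adjacency on `ℤ`): `x` and `y` are distinct with `|x - y| = 1`. -/
def adj2 (x y : ℤ) : Prop := |x - y| = 1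

/-- 8-adjacency on `ℤ²` (the `l₂`-adjacency on `ℤ²`). -/
def adj8 (p q : ℤ × ℤ) : Prop := p ≠ q ∧ |p.1 - q.1| ≤ 1 ∧ |p.2 - q.2| ≤ 1

/-- 26-adjacency on `ℤ³` (the `l₃`-adjacency on `ℤ³`). -/
def adj26 (p q : ℤ × ℤ × ℤ) : Prop :=
  p ≠ q ∧ |p.1 - q.1| ≤ 1 ∧ |p.2.1 - q.2.1| ≤ 1 ∧ |p.2.2 - q.2.2| ≤ 1

/-- An adjacency relation (as any `l_u`-adjacency is) is symmetric and irreflexive. -/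
def IsAdjacency {A : Type*} (κ : A → A → Prop) : Prop := Symmetric κ ∧ Irreflexive κ

/-- `f` is `(κ,λ)`-continuous on `X`: κ-adjacent points are mapped to equal or λ-adjacent
points. -/
def DigContOn {A B : Type*} (f : A → B) (X : Set A)
    (κ : A → A → Prop) (lam : B → B → Prop) : Prop :=
  ∀ x₀ ∈ X, ∀ x₁ ∈ X, κ x₀ x₁ → f x₀ = f x₁ ∨ lam (f x₀) (f x₁)

/-- `f : [0,m]_ℤ → X` is a digital `κ`-path of length `m` in `X`,
i.e. a `(2,κ)`-continuous map on `[0,m]_ℤ` with values in `X`. -/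
def IsDigPath {A : Type*} (X : Set A) (κ : A → A → Prop) (m : ℕ) (f : ℤ → A) : Prop :=
  (∀ i ∈ Icc (0 : ℤ) (m : ℤ), f i ∈ X) ∧
  ∀ i ∈ Icc (0 : ℤ) (m : ℤ), ∀ j ∈ Icc (0 : ℤ) (m : ℤ),
    adj2 i j → f i = f j ∨ κ (f i) (f j)

/-- There is a digital `κ`-path of length `m` in `X` from `x` to `y`. -/
def ReachIn {A : Type*} (X : Set A) (κ : A → A → Prop) (x y : A) (m : ℕ) : Prop :=
  ∃ f : ℤ → A, IsDigPath X κ m f ∧ f 0 = x ∧ f (m : ℤ) = y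

/-- `X` is `κ`-connected: every two of its points are joined by a `κ`-path in `X`. -/
def DigConnected {A : Type*} (X : Set A) (κ : A → A → Prop) : Prop :=
  ∀ x ∈ X, ∀ y ∈ X, ∃ m : ℕ, ReachIn X κ x y m

/-- The `κ`-neighborhood `N_κ(e₀, ε)` of `e₀` in `X` with radius `ε`:
points of `X` whose shortest `κ`-path distance from `e₀` is at most `ε`, together with `e₀`. -/
def Nbhd {A : Type*} (X : Set A) (κ : A → A → Prop) (e₀ : A) (ε : ℕ) : Set A :=
  {e ∈ X | ∃ m : ℕ, m ≤ ε ∧ ReachIn X κ e₀ e m} ∪ {e₀}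

/-- The restriction of `f` to `X` is a `(κ,λ)`-isomorphism onto `Y`: a `(κ,λ)`-continuous
bijection of `X` onto `Y` whose inverse is `(λ,κ)`-continuous. -/
def IsDigIsoOn {A B : Type*} (f : A → B) (X : Set A) (Y : Set B)
    (κ : A → A → Prop) (lam : B → B → Prop) : Prop :=
  MapsTo f X Y ∧ InjOn f X ∧ SurjOn f X Y ∧ DigContOn f X κ lam ∧
  ∀ x₀ ∈ X, ∀ x₁ ∈ X, lam (f x₀) (f x₁) → x₀ = x₁ ∨ κ x₀ x₁

/-- `p` is a radius-`n` digital `(κ,λ)`-covering map of `E` onto `Bs`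
(`n = 1` gives the usual digital `(κ,λ)`-covering map): a `(κ,λ)`-continuous surjection
such that for each `b ∈ Bs` there is a set `F` of points of the fiber over `b` whose radius-`n`
neighborhoods are pairwise disjoint, partition `p⁻¹(N_λ(b,n))`, and are each mapped
isomorphically onto `N_λ(b,n)` by `p`. -/
def IsRadiusCovering {A B : Type*} (p : A → B) (E : Set A) (Bs : Set B)
    (κ : A → A → Prop) (lam : B → B → Prop) (n : ℕ) : Prop :=
  MapsTo p E Bs ∧ SurjOn p E Bs ∧ DigContOn p E κ lam ∧
  ∀ b ∈ Bs, ∃ F : Set A, F ⊆ {e ∈ E | p e = b} ∧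
    (E ∩ p ⁻¹' (Nbhd Bs lam b n) = ⋃ e ∈ F, Nbhd E κ e n) ∧
    F.Pairwise (fun e e' => Disjoint (Nbhd E κ e n) (Nbhd E κ e' n)) ∧
    ∀ e ∈ F, IsDigIsoOn p (Nbhd E κ e n) (Nbhd Bs lam b n) κ lam

/-- `p` is a radius-`n` local `(κ,λ)`-isomorphism (`n = 1` gives the usual local
`(κ,λ)`-isomorphism): for every `e ∈ E` the restriction of `p` to `N_κ(e,n)` is a
`(κ,λ)`-isomorphism onto `N_λ(p e, n)`. -/
def IsLocalIso {A B : Type*} (p : A → B) (E : Set A) (Bs : Set B)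
    (κ : A → A → Prop) (lam : B → B → Prop) (n : ℕ) : Prop :=
  ∀ e ∈ E, IsDigIsoOn p (Nbhd E κ e n) (Nbhd Bs lam (p e) n) κ lam

/-- `p` has the digital path lifting property: every `λ`-path `a` in `Bs` and every point
`e ∈ E` of the fiber over `a 0` admit a lifting of `a` beginning at `e`. -/
def PathLiftingProp {A B : Type*} (p : A → B) (E : Set A) (Bs : Set B)
    (κ : A → A → Prop) (lam : B → B → Prop) : Prop :=
  ∀ (m : ℕ) (a : ℤ → B), IsDigPath Bs lam m a → ∀ e ∈ E, p e = a 0 →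
    ∃ g : ℤ → A, IsDigPath E κ m g ∧ (∀ i ∈ Icc (0 : ℤ) (m : ℤ), p (g i) = a i) ∧ g 0 = e

/-- `p` has the uniqueness of digital path lifts property: two `κ`-paths in `E` with the
same projection and the same starting point coincide (on their domain `[0,m]_ℤ`). -/
def UniqLiftsProp {A B : Type*} (p : A → B) (E : Set A) (κ : A → A → Prop) : Prop :=
  ∀ (m : ℕ) (a b : ℤ → A), IsDigPath E κ m a → IsDigPath E κ m b →
    (∀ i ∈ Icc (0 : ℤ) (m : ℤ), p (a i) = p (b i)) → a 0 = b 0 →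
    EqOn a b (Icc (0 : ℤ) (m : ℤ))

/-- `p` has the unique path lifting property (u.p.l.): both the path lifting property and
the uniqueness of path lifts property. -/
def UPL {A B : Type*} (p : A → B) (E : Set A) (Bs : Set B)
    (κ : A → A → Prop) (lam : B → B → Prop) : Prop :=
  PathLiftingProp p E Bs κ lam ∧ UniqLiftsProp p E κ

/-- `e` is a conciliator point for `p`: there are `e', e'' ∈ N_κ(e,1)` which are not
`κ`-adjacent but whose images are `λ`-adjacent. -/
def IsConciliator {A B : Type*} (p : A → B) (E : Set A)
    (κ : A → A → Prop) (lam : B → B → Prop) (e : A) : Prop :=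
  ∃ e' ∈ Nbhd E κ e 1, ∃ e'' ∈ Nbhd E κ e 1, ¬ κ e' e'' ∧ lam (p e') (p e'')

/-- `f : [0,m]_ℤ → X` is a simple `κ`-loop of length `m` in `X`: a closed `κ`-path such that
`f 0, …, f (m-1)` are pairwise distinct and `f i`, `f j` are `κ`-adjacent iff
`j = i ± 1 (mod m)`. -/
def IsSimpleLoop {A : Type*} (X : Set A) (κ : A → A → Prop) (m : ℕ) (f : ℤ → A) : Prop :=
  IsDigPath X κ m f ∧ f 0 = f (m : ℤ) ∧
  (∀ i ∈ Ico (0 : ℤ) (m : ℤ), ∀ j ∈ Ico (0 : ℤ) (m : ℤ), f i = f j → i = j) ∧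
  ∀ i ∈ Ico (0 : ℤ) (m : ℤ), ∀ j ∈ Ico (0 : ℤ) (m : ℤ),
    (κ (f i) (f j) ↔ (j % (m : ℤ) = (i + 1) % (m : ℤ) ∨ j % (m : ℤ) = (i - 1) % (m : ℤ)))


/-! ### Auxiliary material for Example 3.7 -/

/-- The concrete map of Example 3.7. -/
def qEx (i : ℤ) : ℤ × ℤ :=
  if i % 3 = 0 then ((0 : ℤ), (0 : ℤ)) else if i % 3 = 1 then (1, 0) else (0, 1)

/-- The base set of Example 3.7. -/
def BEx : Set (ℤ × ℤ) := {((0 : ℤ), (0 : ℤ)), (1, 0), (0, 1)}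

lemma mem_BEx (b : ℤ × ℤ) : b ∈ BEx ↔ b = (0, 0) ∨ b = (1, 0) ∨ b = (0, 1) := by
  simp [BEx]

lemma qEx_mem (i : ℤ) : qEx i ∈ BEx := by
  have hi : i % 3 = 0 ∨ i % 3 = 1 ∨ i % 3 = 2 := by omega
  rcases hi with h | h | h <;> simp [qEx, h, BEx]

lemma qEx_eq_iff (i j : ℤ) : qEx i = qEx j ↔ i % 3 = j % 3 := by
  have hi : i % 3 = 0 ∨ i % 3 = 1 ∨ i % 3 = 2 := by omega
  have hj : j % 3 = 0 ∨ j % 3 = 1 ∨ j % 3 = 2 := by omega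
  rcases hi with h | h | h <;> rcases hj with h' | h' | h' <;>
    simp [qEx, h, h', Prod.ext_iff]

lemma qEx_eq0 (k : ℤ) : qEx k = (0, 0) ↔ k % 3 = 0 := by
  have hk : k % 3 = 0 ∨ k % 3 = 1 ∨ k % 3 = 2 := by omega
  rcases hk with h | h | h <;> simp [qEx, h, Prod.ext_iff]

lemma qEx_eq1 (k : ℤ) : qEx k = (1, 0) ↔ k % 3 = 1 := by
  have hk : k % 3 = 0 ∨ k % 3 = 1 ∨ k % 3 = 2 := by omega
  rcases hk with h | h | h <;> simp [qEx, h, Prod.ext_iff]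

lemma qEx_eq2 (k : ℤ) : qEx k = (0, 1) ↔ k % 3 = 2 := by
  have hk : k % 3 = 0 ∨ k % 3 = 1 ∨ k % 3 = 2 := by omega
  rcases hk with h | h | h <;> simp [qEx, h, Prod.ext_iff]

lemma BEx_adj {b b' : ℤ × ℤ} (hb : b ∈ BEx) (hb' : b' ∈ BEx) (hne : b ≠ b') :
    adj8 b b' := by
  rw [mem_BEx] at hb hb'
  rcases hb with rfl | rfl | rfl <;> rcases hb' with rfl | rfl | rfl <;>
    first
      | exact absurd rfl hne
      | exact ⟨hne, by decide, by decide⟩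

lemma adj2_iff (x y : ℤ) : adj2 x y ↔ x = y + 1 ∨ y = x + 1 := by
  unfold adj2
  rcases abs_cases (x - y) with ⟨h1, h2⟩ | ⟨h1, h2⟩ <;> rw [h1] <;> omega

lemma close_cases {x y : ℤ} (h : |x - y| ≤ 1) : x = y ∨ adj2 x y := by
  obtain ⟨h1, h2⟩ := abs_le.mp h
  by_cases hxy : x = y
  · exact Or.inl hxy
  · right
    rw [adj2_iff]
    omega

lemma step_le {x y : ℤ} (h : x = y ∨ adj2 x y) : |x - y| ≤ 1 := by
  rcases h with h | h
  · simp [h]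
  · exact le_of_eq h

lemma mem_nbhd1 {e x : ℤ} (h : |x - e| ≤ 1) : x ∈ Nbhd (univ : Set ℤ) adj2 e 1 := by
  rcases eq_or_ne x e with rfl | hne
  · exact Set.mem_union_right _ rfl
  · have hd : x - e = 1 ∨ x - e = -1 := by
      obtain ⟨h1, h2⟩ := abs_le.mp h
      omega
    refine Set.mem_union_left _ ⟨trivial, 1, le_refl 1,
      fun i => e + i * (x - e), ⟨fun i _ => trivial, ?_⟩, by ring, by push_cast; ring⟩
    intro i _ j _ hij
    right
    show adj2 (e + i * (x - e)) (e + j * (x - e))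
    rw [adj2_iff] at hij
    rw [adj2_iff]
    rcases hij with rfl | rfl <;> rcases hd with hd | hd <;> rw [hd] <;> omega

/-- The "next preimage" step used to construct lifts. -/
def nextEx (x : ℤ) (b : ℤ × ℤ) : ℤ :=
  if qEx x = b then x else if qEx (x + 1) = b then x + 1 else x - 1

lemma nextEx_close (x : ℤ) (b : ℤ × ℤ) : |nextEx x b - x| ≤ 1 := by
  unfold nextEx
  split_ifs
  · simp
  · have h : x + 1 - x = (1 : ℤ) := by ring
    rw [h]; decide
  · have h : x - 1 - x = (-1 : ℤ) := by ring
    rw [h]; decide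

lemma nextEx_spec (x : ℤ) {b : ℤ × ℤ} (hb : b ∈ BEx) : qEx (nextEx x b) = b := by
  unfold nextEx
  split_ifs with h1 h2
  · exact h1
  · exact h2
  · rw [mem_BEx] at hb
    rcases hb with rfl | rfl | rfl
    · rw [qEx_eq0] at h1 h2 ⊢; omega
    · rw [qEx_eq1] at h1 h2 ⊢; omega
    · rw [qEx_eq2] at h1 h2 ⊢; omega

/-- Example 3.7: for `B = {b₀ = (0,0), b₁ = (1,0), b₂ = (0,1)} ⊆ ℤ²` with 8-adjacency and
`p : ℤ → B` given by `p i = b_{i mod 3}`, the map `p` is a `(2,8)`-continuous surjection with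
the unique path lifting property, `0` is a conciliator point for `p`, and `p` is not a
digital `(2,8)`-covering map. -/
theorem example_3_7 (p : ℤ → ℤ × ℤ)
    (hp : ∀ i : ℤ, p i =
      if i % 3 = 0 then ((0 : ℤ), (0 : ℤ)) else if i % 3 = 1 then (1, 0) else (0, 1)) :
    Set.MapsTo p Set.univ ({((0 : ℤ), (0 : ℤ)), (1, 0), (0, 1)} : Set (ℤ × ℤ)) ∧
    Set.SurjOn p Set.univ ({((0 : ℤ), (0 : ℤ)), (1, 0), (0, 1)} : Set (ℤ × ℤ)) ∧
    DigContOn p Set.univ adj2 adj8 ∧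
    UPL p Set.univ ({((0 : ℤ), (0 : ℤ)), (1, 0), (0, 1)} : Set (ℤ × ℤ)) adj2 adj8 ∧
    IsConciliator p Set.univ adj2 adj8 0 ∧
    ¬ IsRadiusCovering p Set.univ ({((0 : ℤ), (0 : ℤ)), (1, 0), (0, 1)} : Set (ℤ × ℤ))
        adj2 adj8 1 := by
  have hpq : p = qEx := funext fun i => hp i
  subst hpq
  have hBEx : ({((0 : ℤ), (0 : ℤ)), (1, 0), (0, 1)} : Set (ℤ × ℤ)) = BEx := rfl
  refine ⟨fun x _ => qEx_mem x, ?_, ?_, ⟨?_, ?_⟩, ?_, ?_⟩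
  · -- SurjOn
    intro b hb
    rw [hBEx, mem_BEx] at hb
    rcases hb with rfl | rfl | rfl
    · exact ⟨0, trivial, by decide⟩
    · exact ⟨1, trivial, by decide⟩
    · exact ⟨2, trivial, by decide⟩
  · -- continuity
    intro x _ y _ _
    by_cases h : qEx x = qEx y
    · exact Or.inl h
    · exact Or.inr (BEx_adj (qEx_mem x) (qEx_mem y) h)
  · -- path lifting
    intro m a ha e _ he
    obtain ⟨gN, hg0, hstep⟩ : ∃ gN : ℕ → ℤ, gN 0 = e ∧
        ∀ n : ℕ, gN (n + 1) = nextEx (gN n) (a ((n : ℤ) + 1)) :=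
      ⟨fun n => Nat.rec e (fun k ih => nextEx ih (a ((k : ℤ) + 1))) n, rfl, fun _ => rfl⟩
    have hval : ∀ n : ℕ, (n : ℤ) ≤ (m : ℤ) → qEx (gN n) = a (n : ℤ) := by
      intro n hn
      cases n with
      | zero => rw [hg0]; simpa using he
      | succ k =>
        have hmem : a ((k : ℤ) + 1) ∈ BEx := by
          rw [← hBEx]
          exact ha.1 ((k : ℤ) + 1) ⟨by omega, by omega⟩
        rw [hstep k]
        push_cast
        exact nextEx_spec _ hmem
    have hcons : ∀ n : ℕ, gN (n + 1) = gN n ∨ adj2 (gN (n + 1)) (gN n) := fun n =>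
      close_cases (by rw [hstep n]; exact nextEx_close _ _)
    refine ⟨fun i => gN i.toNat, ⟨fun i _ => trivial, ?_⟩, ?_, hg0⟩
    · intro i hi j hj hij
      obtain ⟨n₁, rfl⟩ : ∃ n : ℕ, i = (n : ℤ) := ⟨i.toNat, by have := hi.1; omega⟩
      obtain ⟨n₂, rfl⟩ : ∃ n : ℕ, j = (n : ℤ) := ⟨j.toNat, by have := hj.1; omega⟩
      rw [adj2_iff] at hij
      show gN n₁ = gN n₂ ∨ adj2 (gN n₁) (gN n₂)
      rcases hij with h | h
      · have : n₁ = n₂ + 1 := by omega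
        subst this
        rcases hcons n₂ with h' | h'
        · exact Or.inl h'
        · exact Or.inr h'
      · have : n₂ = n₁ + 1 := by omega
        subst this
        rcases hcons n₁ with h' | h'
        · exact Or.inl h'.symm
        · refine Or.inr ?_
          unfold adj2 at h' ⊢
          rw [abs_sub_comm]
          exact h'
    · intro i hi
      obtain ⟨n, rfl⟩ : ∃ n : ℕ, i = (n : ℤ) := ⟨i.toNat, by have := hi.1; omega⟩
      exact hval n hi.2
  · -- uniqueness of lifts
    intro m a b ha hb hproj h0
    have key : ∀ n : ℕ, (n : ℤ) ≤ (m : ℤ) → a (n : ℤ) = b (n : ℤ) := by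
      intro n
      induction n with
      | zero => intro _; simpa using h0
      | succ k ih =>
        intro hn
        have hk : (k : ℤ) ≤ (m : ℤ) := by omega
        have hab := ih hk
        have hi1 : (k : ℤ) ∈ Icc (0 : ℤ) (m : ℤ) := ⟨by omega, hk⟩
        have hi2 : (k : ℤ) + 1 ∈ Icc (0 : ℤ) (m : ℤ) := ⟨by omega, by omega⟩
        have hadj : adj2 ((k : ℤ)) ((k : ℤ) + 1) := by rw [adj2_iff]; omega
        have ha' := abs_le.mp (step_le (ha.2 (k : ℤ) hi1 ((k : ℤ) + 1) hi2 hadj))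
        have hb' := abs_le.mp (step_le (hb.2 (k : ℤ) hi1 ((k : ℤ) + 1) hi2 hadj))
        have hres : a ((k : ℤ) + 1) % 3 = b ((k : ℤ) + 1) % 3 :=
          (qEx_eq_iff _ _).mp (hproj ((k : ℤ) + 1) hi2)
        push_cast
        omega
    intro i hi
    obtain ⟨n, rfl⟩ : ∃ n : ℕ, i = (n : ℤ) := ⟨i.toNat, by have := hi.1; omega⟩
    exact key n hi.2
  · -- conciliator
    refine ⟨1, mem_nbhd1 (by decide), -1, mem_nbhd1 (by decide), ?_, ?_⟩
    · intro hc
      unfold adj2 at hc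
      norm_num at hc
    · show adj8 (qEx 1) (qEx (-1))
      rw [show qEx 1 = (1, 0) from by decide, show qEx (-1) = (0, 1) from by decide]
      exact ⟨by decide, by decide, by decide⟩
  · -- not a covering
    rintro ⟨-, -, -, hcov⟩
    obtain ⟨F, hF, hunion, hdisj, hiso⟩ := hcov (0, 0) (by rw [hBEx, mem_BEx]; left; rfl)
    have h0mem : (0 : ℤ) ∈ Set.univ ∩ qEx ⁻¹' (Nbhd ({((0 : ℤ), (0 : ℤ)), (1, 0), (0, 1)} : Set (ℤ × ℤ)) adj8 (0, 0) 1) := by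
      refine ⟨trivial, ?_⟩
      have : qEx 0 = (0, 0) := by decide
      simp only [Set.mem_preimage, this]
      exact Set.mem_union_right _ rfl
    rw [hunion] at h0mem
    simp only [Set.mem_iUnion] at h0mem
    obtain ⟨e, heF, -⟩ := h0mem
    have H := (hiso e heF).2.2.2.2
    have hne : qEx (e - 1) ≠ qEx (e + 1) := by
      rw [Ne, qEx_eq_iff]
      omega
    have hmem1 : e - 1 ∈ Nbhd (Set.univ : Set ℤ) adj2 e 1 :=
      mem_nbhd1 (by rw [show e - 1 - e = (-1 : ℤ) from by ring]; decide)
    have hmem2 : e + 1 ∈ Nbhd (Set.univ : Set ℤ) adj2 e 1 :=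
      mem_nbhd1 (by rw [show e + 1 - e = (1 : ℤ) from by ring]; decide)
    have hadj := BEx_adj (qEx_mem (e - 1)) (qEx_mem (e + 1)) hne
    rcases H (e - 1) hmem1 (e + 1) hmem2 hadj with h | h
    · omega
    · unfold adj2 at h
      rw [show e - 1 - (e + 1) = (-2 : ℤ) from by ring] at h
      exact absurd h (by decide)
end

section
/- For all integers x₁, y₁, a, b, let X = {q₀ = (x₁,y₁), q₁ = (x₁−1,y₁+1), q₂ = (x₁−2,y₁+1), q₃ = (x₁−3,y₁), q₄ = (x₁−3,y₁−1), q₅ = (x₁−2,y₁−2), q₆ = (x₁−1,y₁−1)} ⊆ ℤ² and Y = {v₀ = (a,b), v₁ = (a−1,b+1), v₂ = (a−2,b), v₃ = (a−1,b−1)} ⊆ ℤ², both with 8-adjacency, and let h : X → Y be defined by h(q_i) = v_{i mod 4}. Then h is not (8,8)-continuous: q₀ and q₆ are 8-adjacent, but h(q₀) = v₀ and h(q₆) = v₂ are neither equal nor 8-adjacent. (Example 4.1, correcting Han's example) -/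
open Set

/-- Example 4.1 (correcting Han's example): the map `h : X → Y` with `h qᵢ = v_{i mod 4}` is
not `(8,8)`-continuous, since `q₀` and `q₆` are 8-adjacent while `h q₀ = v₀` and
`h q₆ = v₂` are neither equal nor 8-adjacent. -/
theorem example_4_1 (x₁ y₁ a b : ℤ) (h : ℤ × ℤ → ℤ × ℤ)
    (h0 : h (x₁, y₁) = (a, b))
    (h1 : h (x₁ - 1, y₁ + 1) = (a - 1, b + 1))
    (h2 : h (x₁ - 2, y₁ + 1) = (a - 2, b))
    (h3 : h (x₁ - 3, y₁) = (a - 1, b - 1))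
    (h4 : h (x₁ - 3, y₁ - 1) = (a, b))
    (h5 : h (x₁ - 2, y₁ - 2) = (a - 1, b + 1))
    (h6 : h (x₁ - 1, y₁ - 1) = (a - 2, b)) :
    adj8 (x₁, y₁) (x₁ - 1, y₁ - 1) ∧
    ((a, b) : ℤ × ℤ) ≠ (a - 2, b) ∧ ¬ adj8 (a, b) (a - 2, b) ∧
    ¬ DigContOn h
      ({(x₁, y₁), (x₁ - 1, y₁ + 1), (x₁ - 2, y₁ + 1), (x₁ - 3, y₁),
        (x₁ - 3, y₁ - 1), (x₁ - 2, y₁ - 2), (x₁ - 1, y₁ - 1)} : Set (ℤ × ℤ))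
      adj8 adj8 := by
  have hadj : adj8 (x₁, y₁) (x₁ - 1, y₁ - 1) := by
    refine ⟨?_, ?_, ?_⟩ <;> simp [Prod.ext_iff, abs_le] <;> omega
  have hne : ((a, b) : ℤ × ℤ) ≠ (a - 2, b) := by
    intro h'; simp [Prod.ext_iff] at h'; omega
  have hnadj : ¬ adj8 (a, b) (a - 2, b) := by
    rintro ⟨-, h', -⟩; simp [abs_le] at h' <;> omega
  refine ⟨hadj, hne, hnadj, fun hc => ?_⟩
  have := hc (x₁, y₁) (by simp) (x₁ - 1, y₁ - 1) (by simp) hadj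
  rw [h0, h6] at this
  rcases this with h' | h'
  · exact hne h'
  · exact hnadj h'
end

section
/- Let p : (E,κ) → (B,λ) be a (κ,λ)-continuous surjection between connected digital images which is a radius 2 local isomorphism. If B is simply connected, then p is a (κ,λ)-isomorphism. (Corollary 4.9) -/
open Set

/-- `f'` (defined on `[0,m']_ℤ`) is a trivial extension of the loop `f` (defined on
`[0,m]_ℤ`): `f'` is obtained from a factorization of `f` into paths by inserting trivial
(constant) loops, i.e. `f' = f ∘ φ` for a monotone reparametrization `φ` with steps `0` or
`1` sending `0` to `0` and `m'` to `m`. -/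
def IsTrivialExt {A : Type*} (m m' : ℕ) (f f' : ℤ → A) : Prop :=
  ∃ φ : ℤ → ℤ, φ 0 = 0 ∧ φ (m' : ℤ) = (m : ℤ) ∧
    (∀ i : ℤ, 0 ≤ i → i < (m' : ℤ) → (φ (i + 1) = φ i ∨ φ (i + 1) = φ i + 1)) ∧
    ∀ i ∈ Set.Icc (0 : ℤ) (m' : ℤ), f' i = f (φ i)

/-- `F : [0,m]_ℤ × [0,s]_ℤ → Bs` is a digital `λ`-homotopy from `f` to `g` holding the
endpoints fixed: its time-slices and its tracks are `(2,λ)`-continuous, it starts at `f`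
and ends at `g`, and it keeps both endpoints fixed. -/
def DigHomotopyRelEnds {B : Type*} (Bs : Set B) (lam : B → B → Prop)
    (m s : ℕ) (F : ℤ → ℤ → B) (f g : ℤ → B) : Prop :=
  (∀ x ∈ Set.Icc (0 : ℤ) (m : ℤ), ∀ t ∈ Set.Icc (0 : ℤ) (s : ℤ), F x t ∈ Bs) ∧
  (∀ x ∈ Set.Icc (0 : ℤ) (m : ℤ), F x 0 = f x ∧ F x (s : ℤ) = g x) ∧
  (∀ x ∈ Set.Icc (0 : ℤ) (m : ℤ), ∀ t ∈ Set.Icc (0 : ℤ) (s : ℤ),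
    ∀ t' ∈ Set.Icc (0 : ℤ) (s : ℤ), adj2 t t' → F x t = F x t' ∨ lam (F x t) (F x t')) ∧
  (∀ t ∈ Set.Icc (0 : ℤ) (s : ℤ), ∀ x ∈ Set.Icc (0 : ℤ) (m : ℤ),
    ∀ x' ∈ Set.Icc (0 : ℤ) (m : ℤ), adj2 x x' → F x t = F x' t ∨ lam (F x t) (F x' t)) ∧
  (∀ t ∈ Set.Icc (0 : ℤ) (s : ℤ), F 0 t = f 0 ∧ F (m : ℤ) t = f (m : ℤ))

/-- Two `λ`-loops `f` (of length `m₁`) and `g` (of length `m₂`) with the same base point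
belong to the same loop class: they have trivial extensions of a common length that are
joined by a digital homotopy holding the endpoints fixed. -/
def SameLoopClass {B : Type*} (Bs : Set B) (lam : B → B → Prop)
    (m₁ m₂ : ℕ) (f g : ℤ → B) : Prop :=
  ∃ (m s : ℕ) (f' g' : ℤ → B) (F : ℤ → ℤ → B),
    IsTrivialExt m₁ m f f' ∧ IsTrivialExt m₂ m g g' ∧
    DigHomotopyRelEnds Bs lam m s F f' g'

/-- `Bs` is simply connected: it is `λ`-connected and its digital fundamental group is
trivial, i.e. every `λ`-loop belongs to the loop class of the constant loop at its base
point. -/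
def DigSimplyConnected {B : Type*} (Bs : Set B) (lam : B → B → Prop) : Prop :=
  DigConnected Bs lam ∧
  ∀ b₀ ∈ Bs, ∀ (m : ℕ) (f : ℤ → B), IsDigPath Bs lam m f → f 0 = b₀ → f (m : ℤ) = b₀ →
    SameLoopClass Bs lam m 0 f (fun _ => b₀)


section CoveringAux

variable {A B : Type*} {E : Set A} {Bs : Set B}
  {κ : A → A → Prop} {lam : B → B → Prop} {p : A → B}

lemma mem_nbhd_self (X : Set A) (κ : A → A → Prop) (e : A) (n : ℕ) :
    e ∈ Nbhd X κ e n := Or.inr rfl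

lemma nbhd_subset {X : Set A} {e : A} (he : e ∈ X) (n : ℕ) :
    Nbhd X κ e n ⊆ X := by
  rintro x (hx | hx)
  · exact hx.1
  · rw [Set.mem_singleton_iff] at hx; subst hx; exact he

lemma mem_nbhd_one {X : Set A} {κ : A → A → Prop} (hsym : Symmetric κ) {e d : A}
    (he : e ∈ X) (hd : d ∈ X) (h : d = e ∨ κ e d) {n : ℕ} (hn : 1 ≤ n) :
    d ∈ Nbhd X κ e n := by
  rcases h with rfl | h
  · exact Or.inr rfl
  · refine Or.inl ⟨hd, 1, hn, fun i => if i = 0 then e else d, ⟨?_, ?_⟩, ?_, ?_⟩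
    · intro i hi
      by_cases h0 : i = 0 <;> simp [h0, he, hd]
    · intro i hi j hj hij
      rw [Set.mem_Icc] at hi hj
      have h1 : i - j = 1 ∨ i - j = -1 := by
        rcases (abs_eq (by norm_num : (0:ℤ) ≤ 1)).mp hij with h' | h' <;> omega
      have : (i = 0 ∧ j = 1) ∨ (i = 1 ∧ j = 0) := by
        push_cast at hi hj; omega
      rcases this with ⟨hi0, hj1⟩ | ⟨hi1, hj0⟩ <;> subst_vars
      · right; simpa using h
      · right; simpa using hsym h
    · simp
    · norm_num

lemma mem_nbhd_two {X : Set A} {κ : A → A → Prop} (hsym : Symmetric κ) {a c d : A}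
    (ha : a ∈ X) (hc : c ∈ X) (hd : d ∈ X)
    (h1 : c = a ∨ κ a c) (h2 : d = c ∨ κ c d) : d ∈ Nbhd X κ a 2 := by
  rcases h1 with rfl | h1
  · exact mem_nbhd_one hsym ha hd h2 (by norm_num)
  rcases h2 with rfl | h2
  · exact mem_nbhd_one hsym ha hd (Or.inr h1) (by norm_num)
  refine Or.inl ⟨hd, 2, le_refl 2,
    fun i => if i ≤ 0 then a else if i ≤ 1 then c else d, ⟨?_, ?_⟩, ?_, ?_⟩
  · intro i hi
    by_cases ha0 : i ≤ 0
    · simp [ha0, ha]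
    · by_cases ha1 : i ≤ 1 <;> simp [ha0, ha1, hc, hd]
  · intro i hi j hj hij
    rw [Set.mem_Icc] at hi hj
    have h' : i - j = 1 ∨ i - j = -1 := by
      rcases (abs_eq (by norm_num : (0:ℤ) ≤ 1)).mp hij with h' | h' <;> omega
    have : (i = 0 ∧ j = 1) ∨ (i = 1 ∧ j = 0) ∨ (i = 1 ∧ j = 2) ∨ (i = 2 ∧ j = 1) := by
      push_cast at hi hj; omega
    rcases this with ⟨hi', hj'⟩ | ⟨hi', hj'⟩ | ⟨hi', hj'⟩ | ⟨hi', hj'⟩ <;> subst_vars <;>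
      norm_num
    · exact Or.inr h1
    · exact Or.inr (hsym h1)
    · exact Or.inr h2
    · exact Or.inr (hsym h2)
  · norm_num
  · norm_num

lemma step_lift (hκ : IsAdjacency κ) (hlam : IsAdjacency lam)
    (hmaps : Set.MapsTo p E Bs) (hloc : IsLocalIso p E Bs κ lam 2)
    {e : A} (he : e ∈ E) {b' : B} (hb' : b' ∈ Bs)
    (hadj : b' = p e ∨ lam (p e) b') :
    ∃ e', e' ∈ E ∧ p e' = b' ∧ (e' = e ∨ κ e e') := by
  obtain ⟨hm, hinj, hsurjN, hcont', hinv⟩ := hloc e he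
  have hb2 : b' ∈ Nbhd Bs lam (p e) 2 :=
    mem_nbhd_one hlam.1 (hmaps he) hb' hadj (by norm_num)
  obtain ⟨e', he'N, hpe'⟩ := hsurjN hb2
  have he'E : e' ∈ E := nbhd_subset he 2 he'N
  rcases hadj with heq | hl
  · refine ⟨e', he'E, hpe', Or.inl (hinj he'N (mem_nbhd_self E κ e 2) ?_)⟩
    rw [hpe', heq]
  · rcases hinv e (mem_nbhd_self E κ e 2) e' he'N (by rw [hpe']; exact hl) with heq2 | hk
    · exfalso; apply hlam.2 b'; rw [heq2, hpe'] at hl; exact hl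
    · exact ⟨e', he'E, hpe', Or.inr hk⟩

lemma uniq_step (hκ : IsAdjacency κ) (hloc : IsLocalIso p E Bs κ lam 2)
    {e e₁ e₂ : A} (he : e ∈ E) (h1E : e₁ ∈ E) (h2E : e₂ ∈ E)
    (h1 : e₁ = e ∨ κ e e₁) (h2 : e₂ = e ∨ κ e e₂) (hp : p e₁ = p e₂) : e₁ = e₂ := by
  obtain ⟨_, hinj, _, _, _⟩ := hloc e he
  exact hinj (mem_nbhd_one hκ.1 he h1E h1 (by norm_num))
    (mem_nbhd_one hκ.1 he h2E h2 (by norm_num)) hp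

lemma diag_step (hκ : IsAdjacency κ) (hlam : IsAdjacency lam)
    (hloc : IsLocalIso p E Bs κ lam 2)
    {a b c d : A} (haE : a ∈ E) (hbE : b ∈ E) (hcE : c ∈ E) (hdE : d ∈ E)
    (hb : b = a ∨ κ a b) (hc : c = a ∨ κ a c) (hd : d = c ∨ κ c d)
    (hpd : p d = p b ∨ lam (p b) (p d)) : d = b ∨ κ b d := by
  obtain ⟨_, hinj, _, _, hinv⟩ := hloc a haE
  have hbN : b ∈ Nbhd E κ a 2 := mem_nbhd_one hκ.1 haE hbE hb (by norm_num)
  have hdN : d ∈ Nbhd E κ a 2 := mem_nbhd_two hκ.1 haE hcE hdE hc hd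
  rcases hpd with heq | hl
  · exact Or.inl (hinj hdN hbN heq)
  · rcases hinv b hbN d hdN hl with h | h
    · exact Or.inl h.symm
    · exact Or.inr h

end CoveringAux

section LiftAux
open Classical

variable {A B : Type*} {E : Set A} {Bs : Set B}
  {κ : A → A → Prop} {lam : B → B → Prop} {p : A → B}

noncomputable def liftF (p : A → B) (E : Set A) (κ : A → A → Prop)
    (e : A) (a : ℤ → B) : ℕ → A :=
  fun n => Nat.rec e (fun k ih =>
    if h : ∃ e', e' ∈ E ∧ p e' = a ((k : ℤ) + 1) ∧ (e' = ih ∨ κ ih e')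
    then h.choose else ih) n

lemma liftF_zero (e : A) (a : ℤ → B) : liftF p E κ e a 0 = e := rfl

lemma liftF_succ (e : A) (a : ℤ → B) (k : ℕ) :
    liftF p E κ e a (k + 1) =
      if h : ∃ e', e' ∈ E ∧ p e' = a ((k : ℤ) + 1) ∧
          (e' = liftF p E κ e a k ∨ κ (liftF p E κ e a k) e')
      then h.choose else liftF p E κ e a k := rfl

lemma lift_spec (hκ : IsAdjacency κ) (hlam : IsAdjacency lam)
    (hmaps : Set.MapsTo p E Bs) (hloc : IsLocalIso p E Bs κ lam 2)
    {e : A} (he : e ∈ E) {a : ℤ → B} (ha0 : p e = a 0) {m : ℕ}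
    (hstep : ∀ n : ℕ, n < m → a ((n : ℤ) + 1) ∈ Bs ∧
      (a ((n : ℤ) + 1) = a n ∨ lam (a n) (a ((n : ℤ) + 1)))) :
    (∀ n : ℕ, n ≤ m → liftF p E κ e a n ∈ E ∧ p (liftF p E κ e a n) = a n) ∧
    (∀ n : ℕ, n < m → liftF p E κ e a (n + 1) = liftF p E κ e a n ∨
      κ (liftF p E κ e a n) (liftF p E κ e a (n + 1))) := by
  have main : ∀ n : ℕ, n ≤ m → liftF p E κ e a n ∈ E ∧ p (liftF p E κ e a n) = a n := by
    intro n
    induction n with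
    | zero => intro _; refine ⟨he, ?_⟩; rw [liftF_zero]; simpa using ha0
    | succ k ih =>
      intro hk1
      obtain ⟨hE, hp⟩ := ih (by omega)
      obtain ⟨hBs, hadj⟩ := hstep k (by omega)
      have hex : ∃ e', e' ∈ E ∧ p e' = a ((k : ℤ) + 1) ∧
          (e' = liftF p E κ e a k ∨ κ (liftF p E κ e a k) e') :=
        step_lift hκ hlam hmaps hloc hE hBs (by rw [hp]; exact hadj)
      rw [liftF_succ, dif_pos hex]
      obtain ⟨hc1, hc2, _⟩ := hex.choose_spec
      refine ⟨hc1, ?_⟩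
      push_cast; exact hc2
  refine ⟨main, fun n hn => ?_⟩
  obtain ⟨hE, hp⟩ := main n (by omega)
  obtain ⟨hBs, hadj⟩ := hstep n hn
  have hex : ∃ e', e' ∈ E ∧ p e' = a ((n : ℤ) + 1) ∧
      (e' = liftF p E κ e a n ∨ κ (liftF p E κ e a n) e') :=
    step_lift hκ hlam hmaps hloc hE hBs (by rw [hp]; exact hadj)
  rw [liftF_succ, dif_pos hex]
  exact hex.choose_spec.2.2

lemma lift_unique (hκ : IsAdjacency κ) (hlam : IsAdjacency lam)
    (hmaps : Set.MapsTo p E Bs) (hloc : IsLocalIso p E Bs κ lam 2)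
    {e : A} (he : e ∈ E) {a : ℤ → B} (ha0 : p e = a 0) {m : ℕ}
    (hstep : ∀ n : ℕ, n < m → a ((n : ℤ) + 1) ∈ Bs ∧
      (a ((n : ℤ) + 1) = a n ∨ lam (a n) (a ((n : ℤ) + 1))))
    (h : ℕ → A) (hh0 : h 0 = e)
    (hhE : ∀ n : ℕ, n ≤ m → h n ∈ E) (hhp : ∀ n : ℕ, n ≤ m → p (h n) = a n)
    (hhstep : ∀ n : ℕ, n < m → h (n + 1) = h n ∨ κ (h n) (h (n + 1))) :
    ∀ n : ℕ, n ≤ m → liftF p E κ e a n = h n := by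
  obtain ⟨hmain, hstep'⟩ := lift_spec hκ hlam hmaps hloc he ha0 hstep
  intro n
  induction n with
  | zero => intro _; rw [liftF_zero, hh0]
  | succ k ih =>
    intro h1
    have heq := ih (by omega)
    refine uniq_step hκ hloc (hmain k (by omega)).1 (hmain (k + 1) h1).1 (hhE (k + 1) h1)
      (hstep' k (by omega)) ?_ ?_
    · rw [heq]; exact hhstep k (by omega)
    · exact ((hmain (k + 1) h1).2).trans (hhp (k + 1) h1).symm

end LiftAux

lemma key_inj {A B : Type*} {E : Set A} {Bs : Set B}
    {κ : A → A → Prop} {lam : B → B → Prop} {p : A → B}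
    (hκ : IsAdjacency κ) (hlam : IsAdjacency lam)
    (hconnE : DigConnected E κ)
    (hmaps : Set.MapsTo p E Bs) (hcont : DigContOn p E κ lam)
    (hloc : IsLocalIso p E Bs κ lam 2)
    (hsc : DigSimplyConnected Bs lam) : Set.InjOn p E := by
  intro e₁ h1 e₂ h2 hpe
  obtain ⟨m, g, hg, hg0, hgm⟩ := hconnE e₁ h1 e₂ h2
  have hapath : IsDigPath Bs lam m (fun i => p (g i)) := by
    constructor
    · intro i hi; exact hmaps (hg.1 i hi)
    · intro i hi j hj hij
      rcases hg.2 i hi j hj hij with h | h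
      · exact Or.inl (congrArg p h)
      · exact hcont _ (hg.1 i hi) _ (hg.1 j hj) h
  obtain ⟨m', s, f', g', F, hextf, hextg, hF⟩ :=
    hsc.2 (p e₁) (hmaps h1) m (fun i => p (g i)) hapath
      (by show p (g 0) = p e₁; rw [hg0])
      (by show p (g (m : ℤ)) = p e₁; rw [hgm]; exact hpe.symm)
  obtain ⟨hFmem, hFinit, hFtime, hFspace, hFfix⟩ := hF
  obtain ⟨φ, hφ0, hφm', hφstep, hφeq⟩ := hextf
  obtain ⟨ψ, hψ0, hψm', hψstep, hψeq⟩ := hextg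
  have memN : ∀ t k : ℕ, t ≤ k → (t : ℤ) ∈ Set.Icc (0 : ℤ) (k : ℤ) :=
    fun t k ht => Set.mem_Icc.mpr ⟨Int.natCast_nonneg t, by exact_mod_cast ht⟩
  have memN1 : ∀ t k : ℕ, t < k → ((t : ℤ) + 1) ∈ Set.Icc (0 : ℤ) (k : ℤ) :=
    fun t k ht => Set.mem_Icc.mpr ⟨by positivity, by push_cast; omega⟩
  -- bounds for φ
  have hφmono : ∀ k : ℕ, k ≤ m' → ∀ n : ℕ, n ≤ k → φ (n : ℤ) ≤ φ (k : ℤ) := by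
    intro k
    induction k with
    | zero => intro _ n hn; interval_cases n; exact le_refl _
    | succ k ih =>
      intro hk n hn
      have hstepk := hφstep (k : ℤ) (Int.natCast_nonneg k)
        (by exact_mod_cast (by omega : k < m'))
      have hcast : ((k + 1 : ℕ) : ℤ) = (k : ℤ) + 1 := by push_cast; ring
      by_cases hnk : n = k + 1
      · subst hnk; exact le_refl _
      · have h' := ih (by omega) n (by omega)
        rw [hcast]
        rcases hstepk with h | h <;> omega
  have hφbound : ∀ n : ℕ, n ≤ m' → 0 ≤ φ (n : ℤ) ∧ φ (n : ℤ) ≤ (m : ℤ) := by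
    intro n hn
    constructor
    · have := hφmono n hn 0 (by omega)
      rw [show ((0:ℕ):ℤ) = 0 by norm_num, hφ0] at this; exact this
    · have := hφmono m' (le_refl _) n hn
      rw [hφm'] at this; exact this
  -- column data
  have hcol0 : ∀ t : ℕ, t ≤ s → p e₁ = F 0 (t : ℤ) := by
    intro t ht
    have h01 := (hFfix (t : ℤ) (memN t s ht)).1
    have hf0 : f' 0 = p e₁ := by
      have h2' := hφeq 0 (Set.mem_Icc.mpr ⟨le_refl _, Int.natCast_nonneg m'⟩)
      rw [h2', hφ0]
      show p (g 0) = p e₁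
      rw [hg0]
    rw [h01, hf0]
  have hcolstep : ∀ t : ℕ, t ≤ s → ∀ n : ℕ, n < m' →
      F ((n : ℤ) + 1) (t : ℤ) ∈ Bs ∧
      (F ((n : ℤ) + 1) (t : ℤ) = F (n : ℤ) (t : ℤ) ∨
        lam (F (n : ℤ) (t : ℤ)) (F ((n : ℤ) + 1) (t : ℤ))) := by
    intro t ht n hn
    refine ⟨hFmem _ (memN1 n m' hn) _ (memN t s ht), ?_⟩
    have := hFspace (t : ℤ) (memN t s ht) (n : ℤ) (memN n m' (by omega)) ((n : ℤ) + 1)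
      (memN1 n m' hn)
      (by show |(n:ℤ) - ((n:ℤ)+1)| = 1; rw [show (n:ℤ) - ((n:ℤ)+1) = -1 by ring]; norm_num)
    exact this.imp Eq.symm id
  -- lifted columns
  have hLspec : ∀ t : ℕ, t ≤ s →
      (∀ n : ℕ, n ≤ m' → liftF p E κ e₁ (fun z => F z (t : ℤ)) n ∈ E ∧
        p (liftF p E κ e₁ (fun z => F z (t : ℤ)) n) = F (n : ℤ) (t : ℤ)) ∧
      (∀ n : ℕ, n < m' →
        liftF p E κ e₁ (fun z => F z (t : ℤ)) (n + 1) = liftF p E κ e₁ (fun z => F z (t : ℤ)) n ∨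
        κ (liftF p E κ e₁ (fun z => F z (t : ℤ)) n)
          (liftF p E κ e₁ (fun z => F z (t : ℤ)) (n + 1))) :=
    fun t ht => lift_spec hκ hlam hmaps hloc h1 (hcol0 t ht) (fun n hn => hcolstep t ht n hn)
  -- comparison of adjacent columns
  have hcross : ∀ t : ℕ, t + 1 ≤ s → ∀ x : ℕ, x ≤ m' →
      (liftF p E κ e₁ (fun z => F z ((t + 1 : ℕ) : ℤ)) x =
        liftF p E κ e₁ (fun z => F z (t : ℤ)) x ∨
        κ (liftF p E κ e₁ (fun z => F z (t : ℤ)) x)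
          (liftF p E κ e₁ (fun z => F z ((t + 1 : ℕ) : ℤ)) x)) := by
    intro t ht x
    induction x with
    | zero => intro _; left; rw [liftF_zero, liftF_zero]
    | succ x ih =>
      intro hx1
      have hx : x ≤ m' := by omega
      have ht' : t ≤ s := by omega
      refine diag_step hκ hlam hloc ((hLspec t ht').1 x hx).1 ((hLspec t ht').1 (x+1) hx1).1
        ((hLspec (t+1) ht).1 x hx).1 ((hLspec (t+1) ht).1 (x+1) hx1).1
        ((hLspec t ht').2 x (by omega)) (ih hx) ((hLspec (t+1) ht).2 x (by omega)) ?_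
      rw [((hLspec (t+1) ht).1 (x+1) hx1).2, ((hLspec t ht').1 (x+1) hx1).2]
      have hcastt : ((t + 1 : ℕ) : ℤ) = (t : ℤ) + 1 := by push_cast; ring
      have hcastx : ((x + 1 : ℕ) : ℤ) = (x : ℤ) + 1 := by push_cast; ring
      rw [hcastt, hcastx]
      have := hFtime ((x:ℤ)+1) (memN1 x m' (by omega)) (t : ℤ) (memN t s ht') ((t : ℤ)+1)
        (by rw [← hcastt]; exact memN (t+1) s ht)
        (by show |(t:ℤ) - ((t:ℤ)+1)| = 1; rw [show (t:ℤ) - ((t:ℤ)+1) = -1 by ring]; norm_num)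
      exact this.imp Eq.symm id
  -- the endpoint of the lifted column is constant in t
  have hend : ∀ t : ℕ, t ≤ s →
      liftF p E κ e₁ (fun z => F z (t : ℤ)) m' =
      liftF p E κ e₁ (fun z => F z ((0 : ℕ) : ℤ)) m' := by
    intro t
    induction t with
    | zero => intro _; rfl
    | succ t ih =>
      intro ht
      have ht' : t ≤ s := by omega
      rw [← ih ht']
      have hrel := hcross t ht m' (le_refl _)
      have hp1 := ((hLspec t ht').1 m' (le_refl _)).2
      have hp2 := ((hLspec (t+1) ht).1 m' (le_refl _)).2
      have hfix1 := (hFfix (t : ℤ) (memN t s ht')).2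
      have hfix2 := (hFfix ((t+1 : ℕ) : ℤ) (memN (t+1) s ht)).2
      exact uniq_step hκ hloc ((hLspec t ht').1 m' (le_refl _)).1
        ((hLspec (t+1) ht).1 m' (le_refl _)).1 ((hLspec t ht').1 m' (le_refl _)).1
        hrel (Or.inl rfl) (((hp2.trans hfix2).trans hfix1.symm).trans hp1.symm)
  -- the column at time 0 ends at e₂
  have hgcol : ∀ n : ℕ, n ≤ m' → p (g (φ (n : ℤ))) = F (n : ℤ) ((0 : ℕ) : ℤ) := by
    intro n hn
    have h1' := (hFinit (n : ℤ) (memN n m' hn)).1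
    have h2' := hφeq (n : ℤ) (memN n m' hn)
    rw [show ((0:ℕ):ℤ) = 0 by norm_num, h1', h2']
  have hu0 : liftF p E κ e₁ (fun z => F z ((0 : ℕ) : ℤ)) m' = e₂ := by
    have huniq := lift_unique (a := fun z => F z ((0 : ℕ) : ℤ)) hκ hlam hmaps hloc h1 (hcol0 0 (Nat.zero_le s))
      (fun n hn => hcolstep 0 (Nat.zero_le s) n hn) (fun n => g (φ (n : ℤ)))
      (by show g (φ ((0:ℕ):ℤ)) = e₁; rw [show ((0:ℕ):ℤ) = 0 by norm_num, hφ0, hg0])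
      (fun n hn => hg.1 (φ (n : ℤ)) (Set.mem_Icc.mpr (hφbound n hn)))
      hgcol
      (by
        intro n hn
        have hcast : ((n + 1 : ℕ) : ℤ) = (n : ℤ) + 1 := by push_cast; ring
        show g (φ ((n + 1 : ℕ) : ℤ)) = g (φ (n : ℤ)) ∨ κ (g (φ (n : ℤ))) (g (φ ((n + 1 : ℕ) : ℤ)))
        rcases hφstep (n : ℤ) (Int.natCast_nonneg n) (by exact_mod_cast hn) with h | h
        · left; rw [hcast, h]
        · have hb1 := hφbound n (by omega)
          have hb2 := hφbound (n+1) (by omega)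
          rw [hcast] at hb2 ⊢
          rw [h] at hb2 ⊢
          have := hg.2 (φ (n : ℤ)) (Set.mem_Icc.mpr hb1) (φ (n : ℤ) + 1) (Set.mem_Icc.mpr hb2)
            (by show |φ (n:ℤ) - (φ (n:ℤ)+1)| = 1
                rw [show φ (n:ℤ) - (φ (n:ℤ)+1) = -1 by ring]; norm_num)
          exact this.imp Eq.symm id)
    have := huniq m' (le_refl _)
    rw [this]
    show g (φ (m' : ℤ)) = e₂
    rw [hφm', hgm]
  -- the column at time s ends at e₁
  have hus : liftF p E κ e₁ (fun z => F z ((s : ℕ) : ℤ)) m' = e₁ := by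
    have huniq := lift_unique (a := fun z => F z ((s : ℕ) : ℤ)) hκ hlam hmaps hloc h1 (hcol0 s (le_refl _))
      (fun n hn => hcolstep s (le_refl _) n hn) (fun _ => e₁) rfl (fun _ _ => h1)
      (fun n hn => by
        have h1' := (hFinit (n : ℤ) (memN n m' hn)).2
        have h2' := hψeq (n : ℤ) (memN n m' hn)
        show p e₁ = F (n : ℤ) (s : ℤ)
        rw [h1', h2'])
      (fun _ _ => Or.inl rfl)
    exact huniq m' (le_refl _)
  exact (hus.symm.trans (hend s (le_refl _))).trans hu0

/-- Corollary 4.9: a `(κ,λ)`-continuous surjection between connected digital images which is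
a radius 2 local isomorphism is a `(κ,λ)`-isomorphism whenever `Bs` is simply connected. -/
theorem cor_4_9 {N M : ℕ} (E : Set (Fin N → ℤ)) (Bs : Set (Fin M → ℤ))
    (κ : (Fin N → ℤ) → (Fin N → ℤ) → Prop) (lam : (Fin M → ℤ) → (Fin M → ℤ) → Prop)
    (hκ : IsAdjacency κ) (hlam : IsAdjacency lam)
    (hconnE : DigConnected E κ) (hconnB : DigConnected Bs lam)
    (p : (Fin N → ℤ) → (Fin M → ℤ))
    (hmaps : Set.MapsTo p E Bs) (hsurj : Set.SurjOn p E Bs)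
    (hcont : DigContOn p E κ lam)
    (hloc : IsLocalIso p E Bs κ lam 2)
    (hsc : DigSimplyConnected Bs lam) :
    IsDigIsoOn p E Bs κ lam := by
  have hinj : Set.InjOn p E := key_inj hκ hlam hconnE hmaps hcont hloc hsc
  refine ⟨hmaps, hinj, hsurj, hcont, ?_⟩
  intro x₀ h0 x₁ h1 hl
  obtain ⟨_, _, hsurjN, _, hinv⟩ := hloc x₀ h0
  have hx1N : p x₁ ∈ Nbhd Bs lam (p x₀) 2 :=
    mem_nbhd_one hlam.1 (hmaps h0) (hmaps h1) (Or.inr hl) (by norm_num)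
  obtain ⟨x', hx'N, hpx'⟩ := hsurjN hx1N
  have hx'E : x' ∈ E := nbhd_subset h0 2 hx'N
  have hxx : x' = x₁ := hinj hx'E h1 hpx'
  subst hxx
  exact hinv x₀ (mem_nbhd_self E κ x₀ 2) x' hx'N hl
end
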